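/- Let β ∈ B_n be a braid with 1 < β < σ₁ in the Dehornoy ordering. Then a contradiction follows; more precisely, if β is i-positive for some i > 1 then σ₁⁻¹β is also i-positive, hence σ₁ < β, and if i = 1 then β is a nonzero power of σ₁, which cannot satisfy 1 < β < σ₁. -/

import Mathlib

/-- The braid relations on generators indexed by `Fin m` (generator `i` is `σ_{i+1}`). -/
def braidRels (m : ℕ) : Set (FreeGroup (Fin m)) :=
  {r | (∃ i j : Fin m, (i : ℕ) + 1 < (j : ℕ) ∧
        r = FreeGroup.of i * FreeGroup.of j * (FreeGroup.of i)⁻¹ * (FreeGroup.of j)⁻¹) ∨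
       (∃ i j : Fin m, (i : ℕ) + 1 = (j : ℕ) ∧
        r = FreeGroup.of i * FreeGroup.of j * FreeGroup.of i *
            (FreeGroup.of j * FreeGroup.of i * FreeGroup.of j)⁻¹)}

/-- The Artin braid group `B_n`, presented with generators `σ₁, …, σ_{n-1}`. -/
abbrev BraidGroup (n : ℕ) := PresentedGroup (braidRels (n - 1))

/-- The Artin generator; `braidGen i` represents `σ_{i+1}`. -/
def braidGen {n : ℕ} (i : Fin (n - 1)) : BraidGroup n := PresentedGroup.of i

/-- `σ_k` (1-indexed), or `1` if out of range. -/
def sigma' (n k : ℕ) : BraidGroup n :=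
  if h : k - 1 < n - 1 then braidGen ⟨k - 1, h⟩ else 1

/-- A braid is `i`-positive (`i : Fin (n-1)` standing for `σ_{i+1}`) if it is represented by
a word using only generators of index ≤ i, in which generator `i` occurs, and only with
positive exponent. -/
def IsIPositive {n : ℕ} (β : BraidGroup n) (i : Fin (n - 1)) : Prop :=
  ∃ w : FreeGroup (Fin (n - 1)), PresentedGroup.mk (braidRels (n - 1)) w = β ∧
    (∀ l ∈ w.toWord, l.1 ≤ i ∧ (l.1 = i → l.2 = true)) ∧ (∃ l ∈ w.toWord, l.1 = i)

/-- A braid is `i`-negative if its inverse is `i`-positive. -/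
def IsINegative {n : ℕ} (β : BraidGroup n) (i : Fin (n - 1)) : Prop :=
  IsIPositive β⁻¹ i

/-- Dehornoy-positive braids: `i`-positive for some `i`. -/
def DPos {n : ℕ} (β : BraidGroup n) : Prop := ∃ i, IsIPositive β i

/-- The Dehornoy ordering on `B_n`. -/
def DLt {n : ℕ} (a b : BraidGroup n) : Prop := DPos (a⁻¹ * b)

/-- The copy of `B_r` inside `B_n` generated by `σ₁, …, σ_{r-1}`. -/
def braidSub (n r : ℕ) : Subgroup (BraidGroup n) :=
  Subgroup.closure {β | ∃ i : Fin (n - 1), (i : ℕ) < r - 1 ∧ β = braidGen i}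

/-- `σ_a σ_{a-1} ⋯ σ_b` (1-indexed). -/
def descSeg (n a b : ℕ) : BraidGroup n :=
  (((List.range (a - b + 1)).map fun j => sigma' n (a - j)).prod)

/-- The Garside half twist `Δ_k = (σ_{k-1}⋯σ₁)(σ_{k-1}⋯σ₂)⋯(σ_{k-1}σ_{k-2})(σ_{k-1})`
viewed in `B_n`. -/
def Delta (n k : ℕ) : BraidGroup n :=
  (((List.range (k - 1)).map fun m => descSeg n (k - 1) (m + 1)).prod)

private lemma mk_replicate_aux {α : Type*} (x : α) (m : ℕ) :
    FreeGroup.mk (List.replicate m (x, true)) = FreeGroup.of x ^ m := by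
  induction m with
  | zero => rfl
  | succ m ih =>
    rw [List.replicate_succ, ← List.singleton_append, ← FreeGroup.mul_mk, ih, pow_succ']
    rfl

private lemma dpos_gen_pow {n : ℕ} (hn : 2 ≤ n) (m : ℕ) (hm : 0 < m) :
    IsIPositive ((braidGen (⟨0, Nat.sub_pos_of_lt hn⟩ : Fin (n - 1))) ^ m)
      (⟨0, Nat.sub_pos_of_lt hn⟩ : Fin (n - 1)) := by
  set z : Fin (n - 1) := ⟨0, by omega⟩
  refine ⟨FreeGroup.mk (List.replicate m (z, true)), ?_, ?_, ?_⟩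
  · rw [mk_replicate_aux, map_pow]; rfl
  · intro l hl
    rw [FreeGroup.toWord_mk, FreeGroup.reduce_replicate] at hl
    have := List.eq_of_mem_replicate hl
    subst this
    exact ⟨le_refl _, fun _ => rfl⟩
  · refine ⟨(z, true), ?_, rfl⟩
    rw [FreeGroup.toWord_mk, FreeGroup.reduce_replicate]
    exact List.mem_replicate.2 ⟨hm.ne', rfl⟩

private lemma ipos_step {n : ℕ} (hn : 2 ≤ n) (i : Fin (n - 1)) (hi : 0 < (i : ℕ))
    (β : BraidGroup n) (h : IsIPositive β i) :
    IsIPositive ((braidGen (⟨0, Nat.sub_pos_of_lt hn⟩ : Fin (n - 1)))⁻¹ * β) i := by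
  set z : Fin (n - 1) := ⟨0, by omega⟩ with hz
  obtain ⟨w, hw, hpos, l₀, hl₀, hl₀i⟩ := h
  refine ⟨FreeGroup.mk ((z, false) :: w.toWord), ?_, ?_, ?_⟩
  · have h1 : FreeGroup.mk ((z, false) :: w.toWord) = (FreeGroup.of z)⁻¹ * w := by
      have h2 : (FreeGroup.of z)⁻¹ = FreeGroup.mk [(z, false)] := rfl
      rw [h2]
      conv_rhs => rw [← FreeGroup.mk_toWord (x := w)]
      rw [FreeGroup.mul_mk, List.singleton_append]
    rw [h1, map_mul, map_inv, hw]
    rfl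
  · intro l hl
    rw [FreeGroup.toWord_mk] at hl
    have hl' : l ∈ (z, false) :: w.toWord :=
      (FreeGroup.Red.sublist FreeGroup.reduce.red).subset hl
    rcases List.mem_cons.1 hl' with rfl | hmem
    · refine ⟨Nat.zero_le _, fun hcontra => ?_⟩
      exfalso
      have h'' : (0 : ℕ) = (i : ℕ) := congrArg Fin.val hcontra
      omega
    · exact hpos l hmem
  · obtain ⟨hd, tl, hL⟩ : ∃ hd tl, w.toWord = hd :: tl := by
      cases h' : w.toWord with
      | nil => rw [h'] at hl₀; simp at hl₀
      | cons a b => exact ⟨a, b, rfl⟩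
    have hred : FreeGroup.reduce w.toWord = w.toWord := FreeGroup.reduce_toWord w
    rw [FreeGroup.toWord_mk, FreeGroup.reduce.cons, hred, hL]
    have hl₀' : l₀ ∈ hd :: tl := hL ▸ hl₀
    show ∃ l ∈ (if (z, false).1 = hd.1 ∧ (z, false).2 = !hd.2 then tl
        else (z, false) :: hd :: tl), l.1 = i
    split_ifs with hc
    · rcases List.mem_cons.1 hl₀' with rfl | hmem
      · exfalso
        have h'' : (0 : ℕ) = (l₀.1 : ℕ) := congrArg Fin.val hc.1
        rw [hl₀i] at h''
        omega
      · exact ⟨l₀, hmem, hl₀i⟩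
    · exact ⟨l₀, List.mem_cons_of_mem _ hl₀', hl₀i⟩

private lemma ipos_zero {n : ℕ} (hn : 2 ≤ n) (β : BraidGroup n)
    (h : IsIPositive β (⟨0, Nat.sub_pos_of_lt hn⟩ : Fin (n - 1))) :
    ∃ k : ℤ, k ≠ 0 ∧ β = (braidGen (⟨0, Nat.sub_pos_of_lt hn⟩ : Fin (n - 1))) ^ k := by
  set z : Fin (n - 1) := ⟨0, by omega⟩ with hz
  obtain ⟨w, hw, hpos, l₀, hl₀, _⟩ := h
  have hall : ∀ l ∈ w.toWord, l = (z, true) := by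
    intro l hl
    obtain ⟨h1, h2⟩ := hpos l hl
    have h1' : (l.1 : ℕ) ≤ 0 := h1
    have h1'' : (l.1 : ℕ) = 0 := Nat.le_zero.1 h1'
    have hfst : l.1 = z := Fin.ext h1''
    exact Prod.ext hfst (h2 hfst)
  have hlen : w.toWord.length ≠ 0 := by
    intro h0
    rw [List.length_eq_zero_iff] at h0
    rw [h0] at hl₀
    simp at hl₀
  obtain ⟨m, hm⟩ : ∃ m, w.toWord.length = m := ⟨_, rfl⟩
  refine ⟨(m : ℤ), by exact_mod_cast hm ▸ hlen, ?_⟩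
  have hwrep : w.toWord = List.replicate m (z, true) := by
    rw [← hm]; exact List.eq_replicate_of_mem hall
  have hweq : w = FreeGroup.of z ^ m := by
    conv_lhs => rw [← FreeGroup.mk_toWord (x := w), hwrep]
    rw [mk_replicate_aux]
  rw [← hw, hweq, map_pow, zpow_natCast]
  rfl

/-- No braid `β` satisfies `1 < β < σ₁` in the Dehornoy ordering.  More precisely: if `β`
is `i`-positive for some `i > 1` then `σ₁⁻¹β` is again `i`-positive (so `σ₁ < β`); if `β`
is `1`-positive then `β` is a nonzero power of `σ₁`; and `1 < β < σ₁` yields `False`. -/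
theorem stmt_7 {n : ℕ} (hn : 2 ≤ n)
    (hmul : ∀ a b : BraidGroup n, DPos a → DPos b → DPos (a * b))
    (htri : ∀ a : BraidGroup n,
      (a = 1 ∧ ¬DPos a ∧ ¬DPos a⁻¹) ∨ (DPos a ∧ a ≠ 1 ∧ ¬DPos a⁻¹) ∨
      (DPos a⁻¹ ∧ a ≠ 1 ∧ ¬DPos a))
    (β : BraidGroup n) :
    letI σ₁ : BraidGroup n := braidGen (⟨0, by omega⟩ : Fin (n - 1))
    (∀ i : Fin (n - 1), 0 < (i : ℕ) → IsIPositive β i → IsIPositive (σ₁⁻¹ * β) i) ∧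
    (IsIPositive β (⟨0, by omega⟩ : Fin (n - 1)) → ∃ k : ℤ, k ≠ 0 ∧ β = σ₁ ^ k) ∧
    (DPos β → DPos (β⁻¹ * σ₁) → False) := by
  have hpf : 0 < n - 1 := by omega
  refine ⟨fun i hi h => ipos_step hn i hi β h, fun h => ipos_zero hn β h, ?_⟩
  show DPos β → DPos (β⁻¹ * braidGen (⟨0, hpf⟩ : Fin (n - 1))) → False
  intro hβ hs
  set σ₁ : BraidGroup n := braidGen (⟨0, hpf⟩ : Fin (n - 1)) with hσ
  have key : ∀ m : ℕ, 0 < m → DPos (σ₁ ^ m) :=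
    fun m hm => ⟨_, dpos_gen_pow hn m hm⟩
  obtain ⟨i, hβi⟩ := hβ
  by_cases hi : 0 < (i : ℕ)
  · have hstep : IsIPositive (σ₁⁻¹ * β) i := ipos_step hn i hi β hβi
    have hDinv : DPos (β⁻¹ * σ₁)⁻¹ := by
      rw [mul_inv_rev, inv_inv]
      exact ⟨i, hstep⟩
    rcases htri (β⁻¹ * σ₁) with ⟨_, h1, _⟩ | ⟨_, _, h2⟩ | ⟨_, _, h3⟩
    · exact h1 hs
    · exact h2 hDinv
    · exact h3 hs
  · have hi0 : i = (⟨0, by omega⟩ : Fin (n - 1)) := Fin.ext (by show (i : ℕ) = 0; omega)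
    obtain ⟨k, hk, hβk0⟩ := ipos_zero hn β (hi0 ▸ hβi)
    have hβk : β = σ₁ ^ k := hβk0
    rcases lt_trichotomy k 1 with hk1 | hk1 | hk1
    · have hkneg : k < 0 := by omega
      have hβinv : DPos β⁻¹ := by
        have heq : β⁻¹ = σ₁ ^ ((-k).toNat) := by
          rw [hβk, ← zpow_natCast, Int.toNat_of_nonneg (by omega), ← zpow_neg]
        rw [heq]
        exact key _ (by omega)
      rcases htri β with ⟨_, h1, _⟩ | ⟨_, _, h2⟩ | ⟨_, _, h3⟩
      · exact h1 ⟨i, hβi⟩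
      · exact h2 hβinv
      · exact h3 ⟨i, hβi⟩
    · have hone : β⁻¹ * σ₁ = 1 := by
        rw [hβk, hk1]
        group
      rcases htri (β⁻¹ * σ₁) with ⟨_, h1, _⟩ | ⟨_, hne, _⟩ | ⟨_, hne, _⟩
      · exact h1 hs
      · exact hne hone
      · exact hne hone
    · have hDinv : DPos (β⁻¹ * σ₁)⁻¹ := by
        have heq : (β⁻¹ * σ₁)⁻¹ = σ₁ ^ ((k - 1).toNat) := by
          rw [hβk, ← zpow_natCast, Int.toNat_of_nonneg (by omega)]
          group
        rw [heq]
        exact key _ (by omega)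
      rcases htri (β⁻¹ * σ₁) with ⟨_, h1, _⟩ | ⟨_, _, h2⟩ | ⟨_, _, h3⟩
      · exact h1 hs
      · exact h2 hDinv
      · exact h3 hs
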